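/- For every real number t with |Real.log t| ≤ 1 (equivalently exp(−1) ≤ t ≤ exp 1), the following two inequalities hold: |Real.log t + 1 − t| ≤ 2 · (exp 1)^3 · (Real.sqrt t − 1)^2, and (Real.log t)^2 ≤ 4 · (exp 1)^3 · (Real.sqrt t − 1)^2. -/

import Mathlib

set_option maxHeartbeats 1000000

/-- For `|log t| ≤ 1`: `|log t + 1 − t| ≤ 2e³(√t − 1)²` and `(log t)² ≤ 4e³(√t − 1)²`. -/
theorem log_bounds (t : ℝ) (h : |Real.log t| ≤ 1) :
    |Real.log t + 1 - t| ≤ 2 * Real.exp 1 ^ 3 * (Real.sqrt t - 1) ^ 2 ∧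
    Real.log t ^ 2 ≤ 4 * Real.exp 1 ^ 3 * (Real.sqrt t - 1) ^ 2 := by
  have he : (2.7182818283 : ℝ) < Real.exp 1 := Real.exp_one_gt_d9
  have heu : Real.exp 1 < 2.7182818286 := Real.exp_one_lt_d9
  have hE : (19 : ℝ) ≤ Real.exp 1 ^ 3 := by
    have h27 : (2.7 : ℝ) ≤ Real.exp 1 := by linarith
    have := pow_le_pow_left₀ (by norm_num : (0:ℝ) ≤ 2.7) h27 3
    nlinarith
  rw [abs_le] at h
  obtain ⟨hL1, hL2⟩ := h
  rcases le_or_gt t 0 with h0 | h0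
  · -- t ≤ 0 : sqrt t = 0, log t = log (-t) ∈ [-1,1], t ≥ -e
    have hs : Real.sqrt t = 0 := Real.sqrt_eq_zero_of_nonpos h0
    have hte : -(Real.exp 1) ≤ t := by
      rcases eq_or_lt_of_le h0 with rfl | h0'
      · have := (Real.exp_pos 1).le; linarith
      · have hlt : Real.log (-t) = Real.log t := Real.log_neg_eq_log t
        have : -t ≤ Real.exp 1 := by
          rw [← Real.log_le_iff_le_exp (by linarith), hlt]; exact hL2
        linarith
    rw [hs, show ((0:ℝ)-1)^2 = 1 by norm_num, mul_one, mul_one]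
    have hsq : Real.log t ^ 2 ≤ 1 := by nlinarith
    constructor
    · rw [abs_le]; constructor <;> linarith
    · linarith
  · have hsp : 0 < Real.sqrt t := Real.sqrt_pos.mpr h0
    set s := Real.sqrt t with hsdef
    set e := Real.exp 1 with hedef
    have hepos : (0:ℝ) < e := Real.exp_pos 1
    have hs : s ^ 2 = t := Real.sq_sqrt h0.le
    have hlog : Real.log t = 2 * Real.log s := by
      rw [← hs, Real.log_pow]; push_cast; ring
    set L := Real.log s with hLdef
    have hA : L ≤ s - 1 := Real.log_le_sub_one_of_pos hsp
    have hB : s - 1 ≤ L * s := by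
      have h1 : Real.log s⁻¹ ≤ s⁻¹ - 1 := Real.log_le_sub_one_of_pos (by positivity)
      rw [Real.log_inv] at h1
      have h2 := mul_le_mul_of_nonneg_right h1 hsp.le
      have h3 : s⁻¹ * s = 1 := inv_mul_cancel₀ hsp.ne'
      nlinarith
    have ht1 : t ≤ e := (Real.log_le_iff_le_exp h0).mp hL2
    have ht2 : 1 ≤ e * t := by
      have h4 := (Real.le_log_iff_exp_le h0).mp hL1
      rw [Real.exp_neg] at h4
      calc (1:ℝ) = e * e⁻¹ := by field_simp
        _ ≤ e * t := by gcongr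
    have hs2 : 1 ≤ e * s ^ 2 := by rw [hs]; exact ht2
    have hse : s ^ 2 ≤ e := by rw [hs]; exact ht1
    have hhalf : (1:ℝ)/2 < s := by nlinarith [sq_nonneg (s - 1/2)]
    have hsup : s < 2 := by nlinarith [sq_nonneg (s - 2)]
    have he3 : 1 ≤ e ^ 3 * s ^ 2 := by
      have hE2 : 1 ≤ e ^ 2 := by nlinarith
      have := mul_le_mul hE2 hs2 (by norm_num) (by positivity)
      nlinarith [this]
    rw [hlog]
    constructor
    · rw [abs_le]
      constructor
      · -- lower bound
        have hinner : 0 ≤ 2 * e^3 * s - s - 2 := by nlinarith [mul_pos hsp hepos]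
        have key : 0 ≤ (s-1)^2 * (2 * e^3 * s - s - 2) :=
          mul_nonneg (sq_nonneg _) hinner
        have hXs : 0 ≤ s * (2*L + 1 - s^2 + 2*e^3*(s-1)^2) := by nlinarith [key, hB]
        have h4 : 0 ≤ (s * (2*L + 1 - s^2 + 2*e^3*(s-1)^2)) * s⁻¹ :=
          mul_nonneg hXs (inv_nonneg.mpr hsp.le)
        have h5 : (s * (2*L + 1 - s^2 + 2*e^3*(s-1)^2)) * s⁻¹
            = 2*L + 1 - s^2 + 2*e^3*(s-1)^2 := by
          field_simp
        rw [h5] at h4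
        rw [← hs]; linarith
      · rw [← hs]
        nlinarith [hA, mul_nonneg (pow_pos hepos 3).le (sq_nonneg (s-1)), sq_nonneg (s-1)]
    · -- (2L)^2 ≤ 4 e^3 (s-1)^2
      rcases le_or_gt 1 s with hc | hc
      · -- s ≥ 1 : 0 ≤ L ≤ s-1
        have hL0 : (0:ℝ) ≤ L := Real.log_nonneg hc
        have hLsq : L^2 ≤ (s-1)^2 := by
          nlinarith [mul_nonneg (by linarith : (0:ℝ) ≤ s - 1 - L)
            (by linarith : (0:ℝ) ≤ s - 1 + L)]
        have h1 : (0:ℝ) ≤ (e^3 - 1) * (s-1)^2 :=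
          mul_nonneg (by nlinarith) (sq_nonneg _)
        nlinarith [hLsq, h1]
      · -- s < 1
        have f1 : s - 1 - L * s ≤ 0 := by linarith
        have f2 : s - 1 + L * s ≤ 0 := by
          nlinarith [mul_le_mul_of_nonneg_right hA hsp.le]
        have key : L^2 * s^2 ≤ (s-1)^2 := by
          nlinarith [mul_nonneg (by linarith : (0:ℝ) ≤ -(s-1-L*s))
            (by linarith : (0:ℝ) ≤ -(s-1+L*s))]
        have step1 : L^2 * s^2 ≤ (e^3 * (s-1)^2) * s^2 := by
          nlinarith [key, mul_nonneg (by linarith : (0:ℝ) ≤ e^3 * s^2 - 1) (sq_nonneg (s-1))]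
        have step2 : L^2 ≤ e^3 * (s-1)^2 :=
          (mul_le_mul_iff_of_pos_right (by positivity : (0:ℝ) < s^2)).mp step1
        nlinarith [step2]
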